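/- As operators on V_k for every k ≥ 2, one has z_1 · T_1 · y_1 · T_1^{-1} = q · T_1^{-1} · y_1 · T_1^{-1} · z_1. (This is the mixed relation of the braid group of the once-punctured torus; together with the other relations it shows that sending T_i ↦ q^{-1/2} T_i, y_i ↦ −y_i, z_i ↦ (qt)^{-1} z_i defines a representation of the positive submonoid of that braid group.) -/

import Mathlib

noncomputable section

open LinearMap

/-- `T_i⁻¹ = q⁻¹ (T_i + (q − 1))`, the inverse of a Hecke operator. -/
def heckeInv {F : Type*} [Field F] (q : F) {M : Type*} [AddCommGroup M] [Module F M]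
    (t : Module.End F M) : Module.End F M :=
  q⁻¹ • (t + (q - 1) • (1 : Module.End F M))

/-- `TdownTo1 T j = T_{j↘1} = T_{j−1} T_{j−2} ⋯ T_1`. -/
def TdownTo1 {M : Type*} [Monoid M] (T : ℕ → M) : ℕ → M
  | 0 => 1
  | 1 => 1
  | j + 2 => T (j + 1) * TdownTo1 T (j + 1)

/-- `TupFrom1 T j = T_{1↗j} = T_1 T_2 ⋯ T_{j−1}`. -/
def TupFrom1 {M : Type*} [Monoid M] (T : ℕ → M) : ℕ → M
  | 0 => 1
  | 1 => 1
  | j + 2 => TupFrom1 T (j + 1) * T (j + 1)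

/-- The commutator `d₊d₋ − d₋d₊` as an operator on `V (m+1)`. -/
def commDD {F : Type*} [Field F] (V : ℕ → Type*) [∀ k, AddCommGroup (V k)]
    [∀ k, Module F (V k)] (dm : ∀ k, V (k + 1) →ₗ[F] V k)
    (dp : ∀ k, V k →ₗ[F] V (k + 1)) (m : ℕ) : Module.End F (V (m + 1)) :=
  dp m ∘ₗ dm m - dm (m + 1) ∘ₗ dp (m + 1)

/-- The operators `y_i` on `V (m+1)`:
`y_1 = (q^{k−1}(q−1))⁻¹ (d₊d₋ − d₋d₊) T_{k↘1}` (with `k = m+1`) and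
`y_{i+1} = q T_i⁻¹ y_i T_i⁻¹`. -/
def yOp {F : Type*} [Field F] (q : F) (V : ℕ → Type*) [∀ k, AddCommGroup (V k)]
    [∀ k, Module F (V k)] (T : ∀ k, ℕ → Module.End F (V k))
    (dm : ∀ k, V (k + 1) →ₗ[F] V k) (dp : ∀ k, V k →ₗ[F] V (k + 1)) (m : ℕ) :
    ℕ → Module.End F (V (m + 1))
  | 0 => 1
  | 1 => (q ^ m * (q - 1))⁻¹ • (commDD V dm dp m * TdownTo1 (T (m + 1)) (m + 1))
  | i + 2 => q • (heckeInv q (T (m + 1) (i + 1)) * yOp q V T dm dp m (i + 1) *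
      heckeInv q (T (m + 1) (i + 1)))

/-- The operators `z_i` on `V (m+1)`:
`z_1 = (q^k/(1−q)) (d₊*d₋ − d₋d₊*) T*_{k↘1}` (with `k = m+1`) and
`z_{i+1} = q⁻¹ T_i z_i T_i`. -/
def zOp {F : Type*} [Field F] (q : F) (V : ℕ → Type*) [∀ k, AddCommGroup (V k)]
    [∀ k, Module F (V k)] (T : ∀ k, ℕ → Module.End F (V k))
    (dm : ∀ k, V (k + 1) →ₗ[F] V k) (dps : ∀ k, V k →ₗ[F] V (k + 1)) (m : ℕ) :
    ℕ → Module.End F (V (m + 1))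
  | 0 => 1
  | 1 => (q ^ (m + 1) / (1 - q)) •
      (commDD V dm dps m * TdownTo1 (fun i => heckeInv q (T (m + 1) i)) (m + 1))
  | i + 2 => q⁻¹ • (T (m + 1) (i + 1) * zOp q V T dm dps m (i + 1) * T (m + 1) (i + 1))

/-- The defining relations of an action of the Dyck path algebra `𝔸_q` on the family
`V_k`, for operators `T_i : V_k → V_k` (`1 ≤ i ≤ k−1`), `d₋ : V_{k+1} → V_k`,
`d₊ : V_k → V_{k+1}`. -/
def AqRel {F : Type*} [Field F] (q : F) (V : ℕ → Type*) [∀ k, AddCommGroup (V k)]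
    [∀ k, Module F (V k)] (T : ∀ k, ℕ → Module.End F (V k))
    (dm : ∀ k, V (k + 1) →ₗ[F] V k) (dp : ∀ k, V k →ₗ[F] V (k + 1)) : Prop :=
  (∀ k i, 1 ≤ i → i + 1 ≤ k →
    (T k i - 1) * (T k i + q • (1 : Module.End F (V k))) = 0) ∧
  (∀ k i, 1 ≤ i → i + 2 ≤ k →
    T k i * T k (i + 1) * T k i = T k (i + 1) * T k i * T k (i + 1)) ∧
  (∀ k i j, 1 ≤ i → i + 1 ≤ k → 1 ≤ j → j + 1 ≤ k → i + 1 < j →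
    T k i * T k j = T k j * T k i) ∧
  (∀ m, dm m ∘ₗ dm (m + 1) ∘ₗ (T (m + 2) (m + 1) : V (m + 2) →ₗ[F] V (m + 2)) =
    dm m ∘ₗ dm (m + 1)) ∧
  (∀ m i, 1 ≤ i → i ≤ m →
    (T (m + 1) i : V (m + 1) →ₗ[F] V (m + 1)) ∘ₗ dm (m + 1) =
      dm (m + 1) ∘ₗ (T (m + 2) i : V (m + 2) →ₗ[F] V (m + 2))) ∧
  (∀ m, (T (m + 2) 1 : V (m + 2) →ₗ[F] V (m + 2)) ∘ₗ dp (m + 1) ∘ₗ dp m =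
    dp (m + 1) ∘ₗ dp m) ∧
  (∀ m i, 1 ≤ i → i ≤ m →
    dp (m + 1) ∘ₗ (T (m + 1) i : V (m + 1) →ₗ[F] V (m + 1)) =
      (T (m + 2) (i + 1) : V (m + 2) →ₗ[F] V (m + 2)) ∘ₗ dp (m + 1)) ∧
  (∀ m, dm (m + 1) ∘ₗ (commDD V dm dp (m + 1) : V (m + 2) →ₗ[F] V (m + 2)) ∘ₗ
      (T (m + 2) (m + 1) : V (m + 2) →ₗ[F] V (m + 2)) =
    q • ((commDD V dm dp m : V (m + 1) →ₗ[F] V (m + 1)) ∘ₗ dm (m + 1))) ∧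
  (∀ m, (T (m + 2) 1 : V (m + 2) →ₗ[F] V (m + 2)) ∘ₗ
      (commDD V dm dp (m + 1) : V (m + 2) →ₗ[F] V (m + 2)) ∘ₗ dp (m + 1) =
    q • (dp (m + 1) ∘ₗ (commDD V dm dp m : V (m + 1) →ₗ[F] V (m + 1))))

/-- The intertwining relations between an action of `𝔸_q` (with `d₊`) and an action of
`𝔸_{q⁻¹}` (with `d₊*`): `d₊ z_i = z_{i+1} d₊`, `d₊* y_i = y_{i+1} d₊*` for `1 ≤ i ≤ k`,
and `z_1 d₊ = −t q^{k+1} y_1 d₊* : V_k → V_{k+1}`. -/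
def IntertwineRel {F : Type*} [Field F] (q t : F) (V : ℕ → Type*)
    [∀ k, AddCommGroup (V k)] [∀ k, Module F (V k)]
    (T : ∀ k, ℕ → Module.End F (V k)) (dm : ∀ k, V (k + 1) →ₗ[F] V k)
    (dp dps : ∀ k, V k →ₗ[F] V (k + 1)) : Prop :=
  (∀ m i, 1 ≤ i → i ≤ m + 1 →
    dp (m + 1) ∘ₗ (zOp q V T dm dps m i : V (m + 1) →ₗ[F] V (m + 1)) =
      (zOp q V T dm dps (m + 1) (i + 1) : V (m + 2) →ₗ[F] V (m + 2)) ∘ₗ dp (m + 1)) ∧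
  (∀ m i, 1 ≤ i → i ≤ m + 1 →
    dps (m + 1) ∘ₗ (yOp q V T dm dp m i : V (m + 1) →ₗ[F] V (m + 1)) =
      (yOp q V T dm dp (m + 1) (i + 1) : V (m + 2) →ₗ[F] V (m + 2)) ∘ₗ dps (m + 1)) ∧
  (∀ m, (zOp q V T dm dps m 1 : V (m + 1) →ₗ[F] V (m + 1)) ∘ₗ dp m =
    (-(t * q ^ (m + 1))) •
      ((yOp q V T dm dp m 1 : V (m + 1) →ₗ[F] V (m + 1)) ∘ₗ dps m))

/-- A pair of correctly intertwined actions of `𝔸_q` and `𝔸_{q⁻¹}`: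
`(T, d₋, d₊)` satisfies the relations of `𝔸_q`, `(T⁻¹, d₋, d₊*)` satisfies the relations
of `𝔸_{q⁻¹}`, and the two are correctly intertwined. -/
def CorrectlyIntertwined {F : Type*} [Field F] (q t : F) (V : ℕ → Type*)
    [∀ k, AddCommGroup (V k)] [∀ k, Module F (V k)]
    (T : ∀ k, ℕ → Module.End F (V k)) (dm : ∀ k, V (k + 1) →ₗ[F] V k)
    (dp dps : ∀ k, V k →ₗ[F] V (k + 1)) : Prop :=
  AqRel q V T dm dp ∧
  AqRel q⁻¹ V (fun k i => heckeInv q (T k i)) dm dps ∧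
  IntertwineRel q t V T dm dp dps

/-- The field `ℚ(q,t)` of rational functions in two variables over `ℚ`. -/
abbrev Fqt : Type := FractionRing (MvPolynomial (Fin 2) ℚ)

/-- The element `q` of `ℚ(q,t)`. -/
def qv : Fqt := algebraMap (MvPolynomial (Fin 2) ℚ) Fqt (MvPolynomial.X 0)

/-- The element `t` of `ℚ(q,t)`. -/
def tv : Fqt := algebraMap (MvPolynomial (Fin 2) ℚ) Fqt (MvPolynomial.X 1)

section MixedBraidAux

private lemma mb_aux {M : Type*} [Monoid M] {s u s' u' : M}
    (hb : s * u * s = u * s * u) (hss' : s * s' = 1) (hs's : s' * s = 1)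
    (huu' : u * u' = 1) (hu'u : u' * u = 1) :
    s * (u' * s') = u' * s' * u := by
  have h1 : s * u * s * u' = u * s := by rw [hb, mul_assoc, huu', mul_one]
  have h2 : u * s * u' = s' * (u * s) := by
    have h := congrArg (fun x => s' * x) h1
    simp only [← mul_assoc, hs's, one_mul] at h
    rw [h, mul_assoc]
  have h3 : u * s * (u' * s') = s' * u := by
    rw [← mul_assoc, h2, mul_assoc, mul_assoc, hss', mul_one]
  have h4 := congrArg (fun x => u' * x) h3
  simp only [← mul_assoc, hu'u, one_mul] at h4
  rw [← mul_assoc]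
  exact h4

private lemma hecke_mul_inv {F : Type*} [Field F] {q : F} (hq : q ≠ 0)
    {M : Type*} [AddCommGroup M] [Module F M] {s : Module.End F M}
    (hquad : (s - 1) * (s + q • (1 : Module.End F M)) = 0) :
    s * heckeInv q s = 1 ∧ heckeInv q s * s = 1 := by
  have hs2 : s * s = (1 - q) • s + q • 1 := by
    have h0 : s * s + q • s - (s + q • (1 : Module.End F M)) = 0 := by
      have := hquad
      rw [sub_mul, mul_add, one_mul, mul_smul_comm, mul_one] at this
      exact this
    have h1 : s * s + q • s = s + q • (1 : Module.End F M) := by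
      rw [← sub_eq_zero]; exact h0
    have h2 : s * s = s + q • (1 : Module.End F M) - q • s := eq_sub_of_add_eq h1
    rw [h2]; module
  constructor
  · rw [heckeInv, mul_smul_comm, mul_add, mul_smul_comm, mul_one, hs2]
    match_scalars <;> field_simp <;> ring
  · rw [heckeInv, smul_mul_assoc, add_mul, smul_mul_assoc, one_mul, hs2]
    match_scalars <;> field_simp <;> ring

private lemma comm_heckeInv {F : Type*} [Field F] (q : F)
    {M : Type*} [AddCommGroup M] [Module F M] {a b : Module.End F M}
    (h : a * b = b * a) : a * heckeInv q b = heckeInv q b * a := by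
  simp only [heckeInv, mul_smul_comm, smul_mul_assoc, mul_add, add_mul, h,
    mul_one, one_mul]

private lemma TdownTo1_succ {M : Type*} [Monoid M] (T : ℕ → M) {n : ℕ} (hn : 1 ≤ n) :
    TdownTo1 T (n + 1) = T n * TdownTo1 T n := by
  obtain ⟨p, rfl⟩ : ∃ p, n = p + 1 := ⟨n - 1, by omega⟩
  rfl

end MixedBraidAux

theorem mixed_braid_relation_generic {F : Type*} [Field F] (q t : F) (hq : q ≠ 0)
    (V : ℕ → Type*) [∀ k, AddCommGroup (V k)] [∀ k, Module F (V k)]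
    (T : ∀ k, ℕ → Module.End F (V k)) (dm : ∀ k, V (k + 1) →ₗ[F] V k)
    (dp dps : ∀ k, V k →ₗ[F] V (k + 1))
    (h : CorrectlyIntertwined q t V T dm dp dps) :
    ∀ m, zOp q V T dm dps (m + 1) 1 * T (m + 2) 1 * yOp q V T dm dp (m + 1) 1 *
          heckeInv q (T (m + 2) 1) =
        q • (heckeInv q (T (m + 2) 1) * yOp q V T dm dp (m + 1) 1 *
          heckeInv q (T (m + 2) 1) * zOp q V T dm dps (m + 1) 1) := by
  obtain ⟨h1, h2, h3⟩ := h
  obtain ⟨hquad, hbraid, hcomm, -, hTdm, -, hdpT, -, -⟩ := h1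
  obtain ⟨-, -, -, -, hTdm', -, hdpsT', hphidm', -⟩ := h2
  obtain ⟨hzdp, -, -⟩ := h3
  -- inverses of the Hecke operators
  have hinv : ∀ k i, 1 ≤ i → i + 1 ≤ k →
      T k i * heckeInv q (T k i) = 1 ∧ heckeInv q (T k i) * T k i = 1 :=
    fun k i hi hik => hecke_mul_inv hq (hquad k i hi hik)
  -- applied forms of the basic relations
  have hTdmA : ∀ m i, 1 ≤ i → i ≤ m → ∀ x : V (m + 2),
      T (m + 1) i (dm (m + 1) x) = dm (m + 1) (T (m + 2) i x) :=
    fun m i hi him x => by simpa using LinearMap.ext_iff.mp (hTdm m i hi him) x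
  have hTdmA' : ∀ m i, 1 ≤ i → i ≤ m → ∀ x : V (m + 2),
      heckeInv q (T (m + 1) i) (dm (m + 1) x) =
        dm (m + 1) (heckeInv q (T (m + 2) i) x) :=
    fun m i hi him x => by simpa using LinearMap.ext_iff.mp (hTdm' m i hi him) x
  have hzdpA : ∀ m i, 1 ≤ i → i ≤ m + 1 → ∀ x : V (m + 1),
      dp (m + 1) (zOp q V T dm dps m i x) =
        zOp q V T dm dps (m + 1) (i + 1) (dp (m + 1) x) :=
    fun m i hi him x => by simpa using LinearMap.ext_iff.mp (hzdp m i hi him) x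
  -- dps intertwines the (unstarred) Hecke operators likewise
  have hdpsTA : ∀ m i, 1 ≤ i → i ≤ m → ∀ x : V (m + 1),
      dps (m + 1) (T (m + 1) i x) = T (m + 2) (i + 1) (dps (m + 1) x) := by
    intro m i hi him x
    have h := LinearMap.ext_iff.mp (hdpsT' m i hi him) x
    simp only [comp_apply, heckeInv, LinearMap.smul_apply, LinearMap.add_apply, one_apply, map_smul,
      map_add] at h
    have h2 := smul_right_injective (V (m + 2)) (inv_ne_zero hq) h
    exact add_right_cancel h2
  -- starred relation (7) rearranged
  have hstar8A : ∀ m (x : V (m + 2)),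
      commDD V dm dps m (dm (m + 1) x) =
        q • dm (m + 1) (commDD V dm dps (m + 1)
          (heckeInv q (T (m + 2) (m + 1)) x)) := by
    intro m x
    have h := LinearMap.ext_iff.mp (hphidm' m) x
    simp only [comp_apply, LinearMap.smul_apply] at h
    rw [h, smul_smul, mul_inv_cancel₀ hq, one_smul]
  -- the word T*_{k↘1} commutes past d₋
  have L7A : ∀ m n, n ≤ m + 1 → ∀ x : V (m + 2),
      TdownTo1 (fun i => heckeInv q (T (m + 1) i)) n (dm (m + 1) x) =
        dm (m + 1) (TdownTo1 (fun i => heckeInv q (T (m + 2) i)) n x) := by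
    intro m n
    induction n with
    | zero => intro _ x; simp [TdownTo1]
    | succ p ih =>
      cases p with
      | zero => intro _ x; simp [TdownTo1]
      | succ r =>
        intro hn x
        show (heckeInv q (T (m + 1) (r + 1)) *
            TdownTo1 (fun i => heckeInv q (T (m + 1) i)) (r + 1)) (dm (m + 1) x) =
          dm (m + 1) ((heckeInv q (T (m + 2) (r + 1)) *
            TdownTo1 (fun i => heckeInv q (T (m + 2) i)) (r + 1)) x)
        rw [Module.End.mul_apply, Module.End.mul_apply, ih (by omega) x,
          hTdmA' m (r + 1) (by omega) (by omega) _]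
  -- d₋ intertwines z₁'s
  have ZdmA : ∀ m (x : V (m + 2)),
      zOp q V T dm dps m 1 (dm (m + 1) x) =
        dm (m + 1) (zOp q V T dm dps (m + 1) 1 x) := by
    intro m x
    have hsc : q ^ (m + 1) / (1 - q) * q = q ^ (m + 2) / (1 - q) := by
      rw [div_mul_eq_mul_div, ← pow_succ]
    show (q ^ (m + 1) / (1 - q)) • (commDD V dm dps m *
        TdownTo1 (fun i => heckeInv q (T (m + 1) i)) (m + 1)) (dm (m + 1) x) =
      dm (m + 1) ((q ^ (m + 2) / (1 - q)) • (commDD V dm dps (m + 1) *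
        (heckeInv q (T (m + 2) (m + 1)) *
          TdownTo1 (fun i => heckeInv q (T (m + 2) i)) (m + 1))) x)
    simp only [Module.End.mul_apply, map_smul]
    rw [L7A m (m + 1) le_rfl x, hstar8A m _, smul_smul, hsc]
  -- z₁ T₁ = q T₁⁻¹ z₂  (applied form)
  have zT1A : ∀ m, 1 ≤ m → ∀ x : V (m + 1),
      zOp q V T dm dps m 1 (T (m + 1) 1 x) =
        q • heckeInv q (T (m + 1) 1) (zOp q V T dm dps m 2 x) := by
    intro m hm x
    have e : zOp q V T dm dps m 2 =
        q⁻¹ • (T (m + 1) 1 * zOp q V T dm dps m 1 * T (m + 1) 1) := rfl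
    rw [e]
    simp only [LinearMap.smul_apply, Module.End.mul_apply, map_smul, smul_smul,
      mul_inv_cancel₀ hq, one_smul]
    have h := LinearMap.ext_iff.mp ((hinv (m + 1) 1 le_rfl (by omega)).2)
      (zOp q V T dm dps m 1 (T (m + 1) 1 x))
    simpa [Module.End.mul_apply] using h.symm
  -- the key exchange relation  z₁ T₁ φ = q T₁⁻¹ φ z₁
  have ZphiA : ∀ m (x : V (m + 2)),
      zOp q V T dm dps (m + 1) 1 (T (m + 2) 1 (commDD V dm dp (m + 1) x)) =
        q • heckeInv q (T (m + 2) 1) (commDD V dm dp (m + 1)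
          (zOp q V T dm dps (m + 1) 1 x)) := by
    intro m x
    simp only [commDD, LinearMap.sub_apply, comp_apply, map_sub]
    rw [zT1A (m + 1) (by omega) (dp (m + 1) (dm (m + 1) x))]
    rw [← hzdpA m 1 le_rfl (by omega) (dm (m + 1) x)]
    rw [ZdmA m x]
    rw [hTdmA (m + 1) 1 le_rfl (by omega) (dp (m + 2) x)]
    rw [ZdmA (m + 1) (T (m + 3) 1 (dp (m + 2) x))]
    rw [zT1A (m + 2) (by omega) (dp (m + 2) x)]
    rw [← hzdpA (m + 1) 1 le_rfl (by omega) x]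
    rw [map_smul]
    rw [← hTdmA' (m + 1) 1 le_rfl (by omega)
      (dp (m + 2) (zOp q V T dm dps (m + 1) 1 x))]
    rw [smul_sub]
  -- φ* shifts Hecke operators
  have L3' : ∀ m j, 1 ≤ j → j ≤ m →
      T (m + 2) (j + 1) * commDD V dm dps (m + 1) =
        commDD V dm dps (m + 1) * T (m + 2) j := by
    intro m j hj hjm
    apply LinearMap.ext; intro x
    simp only [Module.End.mul_apply, commDD, LinearMap.sub_apply, comp_apply, map_sub]
    rw [← hTdmA m j hj (by omega) x]
    rw [hdpsTA m j hj hjm (dm (m + 1) x)]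
    rw [hdpsTA (m + 1) j hj (by omega) x]
    rw [← hTdmA (m + 1) (j + 1) (by omega) (by omega) (dps (m + 2) x)]
  -- commutation of a high Hecke operator with a low word
  have L6 : ∀ k r n, n + 1 ≤ r → r + 1 ≤ k →
      T k r * TdownTo1 (fun i => heckeInv q (T k i)) n =
        TdownTo1 (fun i => heckeInv q (T k i)) n * T k r := by
    intro k r n
    induction n with
    | zero => intro _ _; simp [TdownTo1]
    | succ p ih =>
      cases p with
      | zero => intro _ _; simp [TdownTo1]
      | succ s =>
        intro hnr hrk
        have hc : T k r * heckeInv q (T k (s + 1)) =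
            heckeInv q (T k (s + 1)) * T k r :=
          comm_heckeInv q ((hcomm k (s + 1) r (by omega) (by omega) (by omega)
            (by omega) (by omega)).symm)
        show T k r * (heckeInv q (T k (s + 1)) *
            TdownTo1 (fun i => heckeInv q (T k i)) (s + 1)) =
          (heckeInv q (T k (s + 1)) *
            TdownTo1 (fun i => heckeInv q (T k i)) (s + 1)) * T k r
        rw [← mul_assoc, hc, mul_assoc, ih (by omega) hrk, ← mul_assoc]
  -- the shuffle relation:  T_j W* = W* T_{j+1}
  have L5 : ∀ k j n, 1 ≤ j → j + 2 ≤ n → n ≤ k →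
      T k j * TdownTo1 (fun i => heckeInv q (T k i)) n =
        TdownTo1 (fun i => heckeInv q (T k i)) n * T k (j + 1) := by
    intro k j n hj h2n
    induction n, h2n using Nat.le_induction with
    | base =>
      intro hnk
      obtain ⟨j', rfl⟩ : ∃ j', j = j' + 1 := ⟨j - 1, by omega⟩
      have hI1 := hinv k (j' + 1) (by omega) (by omega)
      have hI2 := hinv k (j' + 2) (by omega) (by omega)
      have mb := mb_aux (hbraid k (j' + 1) (by omega) (by omega)) hI1.1 hI1.2
        hI2.1 hI2.2
      have h6 : T k (j' + 2) * TdownTo1 (fun i => heckeInv q (T k i)) (j' + 1) =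
          TdownTo1 (fun i => heckeInv q (T k i)) (j' + 1) * T k (j' + 2) :=
        L6 k (j' + 2) (j' + 1) (by omega) (by omega)
      show T k (j' + 1) * (heckeInv q (T k (j' + 2)) * (heckeInv q (T k (j' + 1)) *
          TdownTo1 (fun i => heckeInv q (T k i)) (j' + 1))) =
        (heckeInv q (T k (j' + 2)) * (heckeInv q (T k (j' + 1)) *
          TdownTo1 (fun i => heckeInv q (T k i)) (j' + 1))) * T k (j' + 2)
      simp only [← mul_assoc]
      simp only [← mul_assoc] at mb
      rw [mb, mul_assoc, h6, ← mul_assoc]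
    | succ n hn ih =>
      intro hnk
      have hc : T k j * heckeInv q (T k n) = heckeInv q (T k n) * T k j :=
        comm_heckeInv q (hcomm k j n hj (by omega) (by omega) (by omega) (by omega))
      rw [TdownTo1_succ _ (by omega : 1 ≤ n)]
      rw [← mul_assoc, hc, mul_assoc, ih (by omega), ← mul_assoc]
  -- z₁ commutes with T_i for i ≥ 2
  have Zcomm : ∀ m i, 2 ≤ i → i + 1 ≤ m + 2 →
      zOp q V T dm dps (m + 1) 1 * T (m + 2) i =
        T (m + 2) i * zOp q V T dm dps (m + 1) 1 := by
    intro m i h2i hik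
    obtain ⟨j, rfl⟩ : ∃ j, i = j + 1 := ⟨i - 1, by omega⟩
    have hphi := L3' m j (by omega) (by omega)
    have hW := L5 (m + 2) j (m + 2) (by omega) (by omega) le_rfl
    show ((q ^ (m + 2) / (1 - q)) • (commDD V dm dps (m + 1) *
        TdownTo1 (fun i => heckeInv q (T (m + 2) i)) (m + 2))) * T (m + 2) (j + 1) =
      T (m + 2) (j + 1) * ((q ^ (m + 2) / (1 - q)) • (commDD V dm dps (m + 1) *
        TdownTo1 (fun i => heckeInv q (T (m + 2) i)) (m + 2)))
    rw [smul_mul_assoc, mul_smul_comm]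
    congr 1
    rw [mul_assoc, ← hW, ← mul_assoc, ← hphi, mul_assoc]
  -- z₁ W = W T₁⁻¹ z₁ T₁
  have ZW : ∀ m n, 1 ≤ n → n + 1 ≤ m + 2 →
      zOp q V T dm dps (m + 1) 1 * TdownTo1 (T (m + 2)) (n + 1) =
        TdownTo1 (T (m + 2)) (n + 1) * (heckeInv q (T (m + 2) 1) *
          (zOp q V T dm dps (m + 1) 1 * T (m + 2) 1)) := by
    intro m n
    induction n with
    | zero => intro h _; exact absurd h (by omega)
    | succ p ih =>
      cases p with
      | zero =>
        intro _ _
        show zOp q V T dm dps (m + 1) 1 * (T (m + 2) 1 * 1) =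
          (T (m + 2) 1 * 1) * (heckeInv q (T (m + 2) 1) *
            (zOp q V T dm dps (m + 1) 1 * T (m + 2) 1))
        rw [mul_one, ← mul_assoc, (hinv (m + 2) 1 le_rfl (by omega)).1, one_mul]
      | succ s =>
        intro _ hk
        show zOp q V T dm dps (m + 1) 1 *
            (T (m + 2) (s + 2) * TdownTo1 (T (m + 2)) (s + 2)) =
          (T (m + 2) (s + 2) * TdownTo1 (T (m + 2)) (s + 2)) *
            (heckeInv q (T (m + 2) 1) *
              (zOp q V T dm dps (m + 1) 1 * T (m + 2) 1))
        rw [← mul_assoc, Zcomm m (s + 2) (by omega) (by omega), mul_assoc,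
          ih (by omega) (by omega), ← mul_assoc]
  -- final assembly
  intro m
  apply LinearMap.ext; intro x
  have hss'A : ∀ y : V (m + 2),
      T (m + 2) 1 (heckeInv q (T (m + 2) 1) y) = y := fun y => by
    simpa [Module.End.mul_apply] using
      LinearMap.ext_iff.mp ((hinv (m + 2) 1 le_rfl (by omega)).1) y
  have ZWA : ∀ y : V (m + 2),
      zOp q V T dm dps (m + 1) 1 (TdownTo1 (T (m + 2)) (m + 2) y) =
        TdownTo1 (T (m + 2)) (m + 2) (heckeInv q (T (m + 2) 1)
          (zOp q V T dm dps (m + 1) 1 (T (m + 2) 1 y))) := fun y => by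
    simpa [Module.End.mul_apply] using
      LinearMap.ext_iff.mp (ZW m (m + 1) (by omega) (by omega)) y
  show zOp q V T dm dps (m + 1) 1 (T (m + 2) 1
      (((q ^ (m + 1) * (q - 1))⁻¹ • (commDD V dm dp (m + 1) *
        TdownTo1 (T (m + 2)) (m + 2))) (heckeInv q (T (m + 2) 1) x))) =
    q • (heckeInv q (T (m + 2) 1) (((q ^ (m + 1) * (q - 1))⁻¹ •
      (commDD V dm dp (m + 1) * TdownTo1 (T (m + 2)) (m + 2)))
        (heckeInv q (T (m + 2) 1) (zOp q V T dm dps (m + 1) 1 x))))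
  simp only [LinearMap.smul_apply, Module.End.mul_apply, map_smul]
  rw [ZphiA m (TdownTo1 (T (m + 2)) (m + 2) (heckeInv q (T (m + 2) 1) x))]
  rw [ZWA (heckeInv q (T (m + 2) 1) x)]
  rw [hss'A x]
  rw [smul_smul, smul_smul, mul_comm]

private lemma qv_ne_zero : qv ≠ 0 := by
  intro h
  have h2 : (MvPolynomial.X 0 : MvPolynomial (Fin 2) ℚ) = 0 :=
    IsFractionRing.injective (MvPolynomial (Fin 2) ℚ) Fqt
      (by simp only [qv] at h; rw [h, map_zero])
  exact MvPolynomial.X_ne_zero 0 h2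

/-- The mixed relation of the braid group of the once-punctured torus:
`z_1 T_1 y_1 T_1⁻¹ = q T_1⁻¹ y_1 T_1⁻¹ z_1` as operators on `V_k` for every `k ≥ 2`
(here `k = m+2`). -/
theorem mixed_braid_relation (V : ℕ → Type*) [∀ k, AddCommGroup (V k)]
    [∀ k, Module Fqt (V k)] (T : ∀ k, ℕ → Module.End Fqt (V k))
    (dm : ∀ k, V (k + 1) →ₗ[Fqt] V k) (dp dps : ∀ k, V k →ₗ[Fqt] V (k + 1))
    (h : CorrectlyIntertwined qv tv V T dm dp dps) :
    ∀ m, zOp qv V T dm dps (m + 1) 1 * T (m + 2) 1 * yOp qv V T dm dp (m + 1) 1 *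
          heckeInv qv (T (m + 2) 1) =
        qv • (heckeInv qv (T (m + 2) 1) * yOp qv V T dm dp (m + 1) 1 *
          heckeInv qv (T (m + 2) 1) * zOp qv V T dm dps (m + 1) 1) := by
  exact mixed_braid_relation_generic qv tv qv_ne_zero V T dm dp dps h
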